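/- Let r ≥ 1 and let σ_1,…,σ_r be finitely supported permutations of ℕ, each different from the identity. Assume the family jointly intersects: the graph on {1,…,r} in which j and j′ are adjacent whenever the supports of σ_j and σ_{j′} intersect is connected. Then 2·|supp(σ_1) ∪ ⋯ ∪ supp(σ_r)| ≤ |σ_1σ_2⋯σ_r| + Σ_{j=1}^r |supp(σ_j)| + Σ_{j=1}^r c(σ_j) + 2 − 2r, where c(σ_j) denotes the number of nontrivial cycles of σ_j and |τ| denotes the Cayley distance of a finitely supported permutation τ. -/

import Mathlib

/-- The Cayley distance of a (finitely supported) permutation of `ℕ`: the minimal number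
of transpositions whose product is `τ`. -/
noncomputable def cayleyDist (τ : Equiv.Perm ℕ) : ℕ :=
  sInf {m | ∃ l : List (Equiv.Perm ℕ), l.length = m ∧
    (∀ g ∈ l, ∃ a b, a ≠ b ∧ g = Equiv.swap a b) ∧ l.prod = τ}

/-- The intersection graph of a family of permutations: `j` and `j'` are adjacent
whenever the supports of `σ j` and `σ j'` intersect. -/
def intersectGraph {r : ℕ} (σ : Fin r → Equiv.Perm ℕ) : SimpleGraph (Fin r) :=
  SimpleGraph.fromRel fun j j' => ({x | σ j x ≠ x} ∩ {x | σ j' x ≠ x}).Nonempty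

/-- The number of nontrivial cycles of a permutation of `ℕ`, counted as the number of
orbits (same-cycle classes) containing a moved point. -/
noncomputable def numCycles (σ : Equiv.Perm ℕ) : ℕ :=
  Nat.card {S : Set ℕ // ∃ x, σ x ≠ x ∧ S = {y | σ.SameCycle x y}}


open Set

namespace Stmt6

/-- The class of `x` under relation `r`. -/
def cls (r : ℕ → ℕ → Prop) (x : ℕ) : Set ℕ := {y | r x y}

/-- Number of classes meeting a set `W`. -/
noncomputable def nclasses (r : ℕ → ℕ → Prop) (W : Set ℕ) : ℕ := (cls r '' W).ncard

theorem mem_cls_self {r : ℕ → ℕ → Prop} (h : Equivalence r) (x : ℕ) : x ∈ cls r x := h.refl x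

theorem cls_eq_of_rel {r : ℕ → ℕ → Prop} (h : Equivalence r) {x y : ℕ} (hxy : r x y) :
    cls r x = cls r y := by
  ext z; exact ⟨fun hz => h.trans (h.symm hxy) hz, fun hz => h.trans hxy hz⟩

theorem rel_of_cls_eq {r : ℕ → ℕ → Prop} (h : Equivalence r) {x y : ℕ}
    (hxy : cls r x = cls r y) : r x y := by
  have : y ∈ cls r x := hxy ▸ mem_cls_self h y
  exact this

/-- The union-of-classes map sends a finer class onto the coarser class. -/
theorem biUnion_cls {r r' : ℕ → ℕ → Prop} (h : Equivalence r) (h' : Equivalence r')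
    (hle : ∀ x y, r x y → r' x y) (x : ℕ) : (⋃ y ∈ cls r x, cls r' y) = cls r' x := by
  apply Subset.antisymm
  · intro z hz
    simp only [mem_iUnion, exists_prop] at hz
    obtain ⟨y, hy, hzy⟩ := hz
    exact h'.trans (hle _ _ hy) hzy
  · intro z hz
    simp only [mem_iUnion, exists_prop]
    exact ⟨x, mem_cls_self h x, hz⟩

theorem image_cls_coarser {r r' : ℕ → ℕ → Prop} (h : Equivalence r) (h' : Equivalence r')
    (hle : ∀ x y, r x y → r' x y) (W : Set ℕ) :
    cls r' '' W = (fun S => ⋃ y ∈ S, cls r' y) '' (cls r '' W) := by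
  rw [image_image]
  apply image_congr
  intro x _
  exact (biUnion_cls h h' hle x).symm

/-- L1: coarsening does not increase the number of classes. -/
theorem nclasses_coarser_le {r r' : ℕ → ℕ → Prop} (h : Equivalence r) (h' : Equivalence r')
    (hle : ∀ x y, r x y → r' x y) {W : Set ℕ} (hW : W.Finite) :
    nclasses r' W ≤ nclasses r W := by
  rw [nclasses, image_cls_coarser h h' hle W]
  exact ncard_image_le (hW.image _)

/-- nclasses is monotone in the set. -/
theorem nclasses_mono {r : ℕ → ℕ → Prop} {W W' : Set ℕ} (hW' : W'.Finite) (hsub : W ⊆ W') :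
    nclasses r W ≤ nclasses r W' :=
  ncard_le_ncard (image_mono hsub) (hW'.image _)


/-- The relation obtained by merging the classes of `a` and `b`. -/
def mergeRel (r : ℕ → ℕ → Prop) (a b : ℕ) : ℕ → ℕ → Prop :=
  fun x y => r x y ∨ (r x a ∧ r y b) ∨ (r x b ∧ r y a)

theorem mergeRel_equivalence {r : ℕ → ℕ → Prop} (h : Equivalence r) (a b : ℕ) :
    Equivalence (mergeRel r a b) := by
  constructor
  · intro x; exact Or.inl (h.refl x)
  · intro x y hxy
    rcases hxy with h1 | ⟨h1, h2⟩ | ⟨h1, h2⟩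
    · exact Or.inl (h.symm h1)
    · exact Or.inr (Or.inr ⟨h2, h1⟩)
    · exact Or.inr (Or.inl ⟨h2, h1⟩)
  · intro x y z hxy hyz
    rcases hxy with h1 | ⟨h1, h2⟩ | ⟨h1, h2⟩ <;>
      rcases hyz with h3 | ⟨h3, h4⟩ | ⟨h3, h4⟩
    · exact Or.inl (h.trans h1 h3)
    · exact Or.inr (Or.inl ⟨h.trans h1 h3, h4⟩)
    · exact Or.inr (Or.inr ⟨h.trans h1 h3, h4⟩)
    · exact Or.inr (Or.inl ⟨h1, h.trans (h.symm h3) h2⟩)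
    · exact Or.inr (Or.inl ⟨h1, h4⟩)
    · exact Or.inl (h.trans h1 (h.symm h4))
    · exact Or.inr (Or.inr ⟨h1, h.trans (h.symm h3) h2⟩)
    · exact Or.inl (h.trans h1 (h.symm h4))
    · exact Or.inr (Or.inr ⟨h1, h4⟩)

theorem le_mergeRel {r : ℕ → ℕ → Prop} (a b : ℕ) : ∀ x y, r x y → mergeRel r a b x y :=
  fun _ _ h => Or.inl h

theorem mergeRel_rel_ab {r : ℕ → ℕ → Prop} (h : Equivalence r) (a b : ℕ) :
    mergeRel r a b a b := Or.inr (Or.inl ⟨h.refl a, h.refl b⟩)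

theorem mergeRel_eq_of_rel {r : ℕ → ℕ → Prop} (h : Equivalence r) {a b : ℕ} (hab : r a b) :
    mergeRel r a b = r := by
  funext x y
  ext
  constructor
  · rintro (h1 | ⟨h1, h2⟩ | ⟨h1, h2⟩)
    · exact h1
    · exact h.trans h1 (h.trans hab (h.symm h2))
    · exact h.trans h1 (h.trans (h.symm hab) (h.symm h2))
  · exact Or.inl

theorem cls_mergeRel_of_untouched {r : ℕ → ℕ → Prop} (_ : Equivalence r) {a b x : ℕ}
    (hxa : ¬ r x a) (hxb : ¬ r x b) : cls (mergeRel r a b) x = cls r x := by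
  ext y
  constructor
  · rintro (h1 | ⟨h1, _⟩ | ⟨h1, _⟩)
    · exact h1
    · exact absurd h1 hxa
    · exact absurd h1 hxb
  · exact Or.inl

theorem cls_mergeRel_of_touched {r : ℕ → ℕ → Prop} (h : Equivalence r) {a b x : ℕ}
    (hx : r x a ∨ r x b) : cls (mergeRel r a b) x = cls r a ∪ cls r b := by
  ext y
  simp only [cls, mem_setOf_eq, mem_union]
  rcases hx with hx | hx
  · constructor
    · rintro (h1 | ⟨_, h2⟩ | ⟨h1, h2⟩)
      · exact Or.inl (h.trans (h.symm hx) h1)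
      · exact Or.inr (h.symm h2)
      · exact Or.inl (h.symm h2)
    · rintro (h1 | h1)
      · exact Or.inl (h.trans hx h1)
      · exact Or.inr (Or.inl ⟨hx, h.symm h1⟩)
  · constructor
    · rintro (h1 | ⟨h1, h2⟩ | ⟨_, h2⟩)
      · exact Or.inr (h.trans (h.symm hx) h1)
      · exact Or.inr (h.symm h2)
      · exact Or.inl (h.symm h2)
    · rintro (h1 | h1)
      · exact Or.inr (Or.inr ⟨hx, h.symm h1⟩)
      · exact Or.inl (h.trans hx h1)

/-- L2: merging loses at most one class. -/
theorem nclasses_le_merge_add_one {r : ℕ → ℕ → Prop} (h : Equivalence r) (a b : ℕ)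
    {W : Set ℕ} (hW : W.Finite) :
    nclasses r W ≤ nclasses (mergeRel r a b) W + 1 := by
  classical
  set r' := mergeRel r a b with hr'
  have h' : Equivalence r' := mergeRel_equivalence h a b
  have hle := le_mergeRel (r := r) a b
  set F : Set ℕ → Set ℕ := fun S => ⋃ y ∈ S, cls r' y with hF
  have himg : cls r' '' W = F '' (cls r '' W) := image_cls_coarser h h' hle W
  have hinj : Set.InjOn F ((cls r '' W) \ {cls r b}) := by
    rintro S ⟨⟨x, hxW, rfl⟩, hSb⟩ S' ⟨⟨x', hx'W, rfl⟩, hS'b⟩ hFS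
    have hFx : F (cls r x) = cls r' x := biUnion_cls h h' hle x
    have hFx' : F (cls r x') = cls r' x' := biUnion_cls h h' hle x'
    rw [hFx, hFx'] at hFS
    by_cases htx : r x a ∨ r x b
    · by_cases htx' : r x' a ∨ r x' b
      · have e1 : cls r x = cls r a := by
          rcases htx with hxa | hxb
          · exact cls_eq_of_rel h hxa
          · exact absurd (cls_eq_of_rel h hxb) (by simpa using hSb)
        have e2 : cls r x' = cls r a := by
          rcases htx' with hxa | hxb
          · exact cls_eq_of_rel h hxa
          · exact absurd (cls_eq_of_rel h hxb) (by simpa using hS'b)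
        rw [e1, e2]
      · push_neg at htx'
        rw [cls_mergeRel_of_touched h htx, cls_mergeRel_of_untouched h htx'.1 htx'.2] at hFS
        have hx'm : x' ∈ cls r a ∪ cls r b := hFS ▸ mem_cls_self h x'
        rcases hx'm with hc | hc
        · exact absurd (h.symm hc) htx'.1
        · exact absurd (h.symm hc) htx'.2
    · push_neg at htx
      by_cases htx' : r x' a ∨ r x' b
      · rw [cls_mergeRel_of_touched h htx', cls_mergeRel_of_untouched h htx.1 htx.2] at hFS
        have hxm : x ∈ cls r a ∪ cls r b := hFS.symm ▸ mem_cls_self h x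
        rcases hxm with hc | hc
        · exact absurd (h.symm hc) htx.1
        · exact absurd (h.symm hc) htx.2
      · push_neg at htx'
        rw [cls_mergeRel_of_untouched h htx.1 htx.2,
          cls_mergeRel_of_untouched h htx'.1 htx'.2] at hFS
        exact hFS
  have hWfin : (cls r '' W).Finite := hW.image _
  calc nclasses r W = (cls r '' W).ncard := rfl
    _ ≤ ((cls r '' W) \ {cls r b}).ncard + 1 := by
        by_cases hmem : cls r b ∈ cls r '' W
        · rw [ncard_diff_singleton_add_one hmem hWfin]
        · rw [diff_singleton_eq_self hmem]; omega
    _ = (F '' ((cls r '' W) \ {cls r b})).ncard + 1 := by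
        rw [ncard_image_of_injOn hinj]
    _ ≤ (F '' (cls r '' W)).ncard + 1 :=
        Nat.add_le_add_right (ncard_le_ncard (image_mono diff_subset) (hWfin.image _)) 1
    _ = nclasses (mergeRel r a b) W + 1 := by rw [← himg]; rfl

/-- L3: coarsening which merges two genuinely distinct classes loses at least one class. -/
theorem nclasses_add_one_le_of_merge {r r2 : ℕ → ℕ → Prop} (h : Equivalence r)
    (h2 : Equivalence r2) (hle : ∀ x y, r x y → r2 x y) {a b : ℕ} (hab : ¬ r a b)
    (h2ab : r2 a b) {W : Set ℕ} (hW : W.Finite) (haW : a ∈ W) (hbW : b ∈ W) :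
    nclasses r2 W + 1 ≤ nclasses r W := by
  classical
  set F : Set ℕ → Set ℕ := fun S => ⋃ y ∈ S, cls r2 y with hF
  have himg : cls r2 '' W = F '' (cls r '' W) := image_cls_coarser h h2 hle W
  have hclsne : cls r a ≠ cls r b := fun hc => hab (rel_of_cls_eq h hc)
  have hFa : F (cls r a) = cls r2 a := biUnion_cls h h2 hle a
  have hFb : F (cls r b) = cls r2 b := biUnion_cls h h2 hle b
  have hFab : F (cls r a) = F (cls r b) := by rw [hFa, hFb, cls_eq_of_rel h2 h2ab]
  have himg2 : F '' (cls r '' W) = F '' ((cls r '' W) \ {cls r b}) := by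
    apply Set.Subset.antisymm
    · rintro S ⟨T, ⟨x, hxW, rfl⟩, rfl⟩
      by_cases hTb : cls r x = cls r b
      · exact ⟨cls r a, ⟨mem_image_of_mem _ haW, by simpa using hclsne⟩, by rw [hTb, ← hFab]⟩
      · exact ⟨cls r x, ⟨mem_image_of_mem _ hxW, by simpa using hTb⟩, rfl⟩
    · exact image_mono diff_subset
  have hWfin : (cls r '' W).Finite := hW.image _
  have hbmem : cls r b ∈ cls r '' W := mem_image_of_mem _ hbW
  calc nclasses r2 W + 1 = (F '' ((cls r '' W) \ {cls r b})).ncard + 1 := by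
        rw [nclasses, himg, himg2]
    _ ≤ ((cls r '' W) \ {cls r b}).ncard + 1 :=
        Nat.add_le_add_right (ncard_image_le hWfin.diff) 1
    _ = (cls r '' W).ncard := ncard_diff_singleton_add_one hbmem hWfin
    _ = nclasses r W := rfl

/-- J: classes of a common coarsening of two relations on a union of two sets. -/
theorem nclasses_join_le {r s R : ℕ → ℕ → Prop} (hr : Equivalence r) (hs : Equivalence s)
    (hR : Equivalence R) (hrR : ∀ x y, r x y → R x y) (hsR : ∀ x y, s x y → R x y)
    {W W' : Set ℕ} (hW : W.Finite) (hW' : W'.Finite) {x₀ : ℕ} (hx₀ : x₀ ∈ W ∩ W') :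
    nclasses R (W ∪ W') + 1 ≤ nclasses r W + nclasses s W' := by
  have himg : cls R '' (W ∪ W') = (cls R '' W) ∪ (cls R '' W') := image_union _ _ _
  have hA : (cls R '' W).ncard ≤ nclasses r W := by
    rw [image_cls_coarser hr hR hrR W]
    exact ncard_image_le (hW.image _)
  have hB : (cls R '' W').ncard ≤ nclasses s W' := by
    rw [image_cls_coarser hs hR hsR W']
    exact ncard_image_le (hW'.image _)
  have hint : (cls R '' W ∩ cls R '' W').Nonempty :=
    ⟨cls R x₀, mem_image_of_mem _ hx₀.1, mem_image_of_mem _ hx₀.2⟩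
  have hfin1 : (cls R '' W).Finite := hW.image _
  have hfin2 : (cls R '' W').Finite := hW'.image _
  have hpos : 1 ≤ (cls R '' W ∩ cls R '' W').ncard :=
    (ncard_pos (hfin1.inter_of_left _)).mpr hint
  have hie := ncard_union_add_ncard_inter (cls R '' W) (cls R '' W') hfin1 hfin2
  have hkey : (cls R '' W ∪ cls R '' W').ncard + 1 ≤
      (cls R '' W).ncard + (cls R '' W').ncard := by omega
  calc nclasses R (W ∪ W') + 1 = (cls R '' W ∪ cls R '' W').ncard + 1 := by
        rw [nclasses, himg]
    _ ≤ (cls R '' W).ncard + (cls R '' W').ncard := hkey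
    _ ≤ nclasses r W + nclasses s W' := by gcongr

/-- Rank does not decrease when a point is added. -/
theorem rank_le_insert {r : ℕ → ℕ → Prop} {W : Set ℕ} (hW : W.Finite) (x : ℕ) :
    (W.ncard : ℤ) - nclasses r W ≤ ((insert x W).ncard : ℤ) - nclasses r (insert x W) := by
  by_cases hx : x ∈ W
  · rw [insert_eq_of_mem hx]
  · rw [ncard_insert_of_notMem hx hW]
    have h1 : nclasses r (insert x W) ≤ nclasses r W + 1 := by
      rw [nclasses, image_insert_eq]
      exact ncard_insert_le _ _
    have h2 : nclasses r W ≤ nclasses r (insert x W) :=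
      nclasses_mono (hW.insert x) (subset_insert x W)
    push_cast
    omega

/-- R2: rank is monotone under set enlargement. -/
theorem rank_mono_set {r : ℕ → ℕ → Prop} {U V : Set ℕ} (hV : V.Finite) (hUV : U ⊆ V) :
    (U.ncard : ℤ) - nclasses r U ≤ (V.ncard : ℤ) - nclasses r V := by
  have hU : U.Finite := hV.subset hUV
  have key : ∀ D : Set ℕ, D.Finite →
      (U.ncard : ℤ) - nclasses r U ≤ ((U ∪ D).ncard : ℤ) - nclasses r (U ∪ D) := by
    intro D hD
    refine Set.Finite.induction_on D hD (by simp) ?_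
    intro x D hxD hDfin ih
    have hins : U ∪ insert x D = insert x (U ∪ D) := by rw [union_insert]
    rw [hins]
    exact ih.trans (rank_le_insert (hU.union hDfin) x)
  have h := key (V \ U) hV.diff
  rwa [union_diff_cancel hUV] at h
open Equiv Equiv.Perm

/-- Support of a permutation, as a set. -/
def psupp (ρ : Equiv.Perm ℕ) : Set ℕ := {x | ρ x ≠ x}

theorem sameCycle_equivalence (ρ : Equiv.Perm ℕ) : Equivalence ρ.SameCycle :=
  ⟨SameCycle.refl ρ, fun h => h.symm, fun h h' => h.trans h'⟩

theorem cls_sameCycle_of_fixed {ρ : Equiv.Perm ℕ} {x : ℕ} (hx : ρ x = x) :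
    cls ρ.SameCycle x = {x} := by
  ext y
  simp only [cls, Set.mem_setOf_eq, Set.mem_singleton_iff]
  constructor
  · rintro ⟨i, hi⟩
    rw [zpow_apply_eq_self_of_apply_eq_self hx i] at hi
    exact hi.symm
  · rintro rfl
    exact SameCycle.refl ρ y

theorem not_sameCycle_of_fixed {ρ : Equiv.Perm ℕ} {x y : ℕ} (hx : ρ x = x) (hxy : x ≠ y) :
    ¬ ρ.SameCycle x y := by
  intro h
  have : y ∈ cls ρ.SameCycle x := h
  rw [cls_sameCycle_of_fixed hx] at this
  exact hxy this.symm

/-- `numCycles` in terms of `nclasses`. -/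
theorem numCycles_eq_nclasses (ρ : Equiv.Perm ℕ) :
    numCycles ρ = nclasses ρ.SameCycle (psupp ρ) := by
  have h1 : {S : Set ℕ | ∃ x, ρ x ≠ x ∧ S = {y | ρ.SameCycle x y}} = cls ρ.SameCycle '' psupp ρ := by
    ext S
    simp only [Set.mem_setOf_eq, Set.mem_image, psupp]
    constructor
    · rintro ⟨x, hx, rfl⟩; exact ⟨x, hx, rfl⟩
    · rintro ⟨x, hx, rfl⟩; exact ⟨x, hx, rfl⟩
  rw [numCycles, nclasses, ← h1]
  exact Nat.card_coe_set_eq _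

/-- D: the defect `|supp ρ| - numCycles ρ` computed on any finite superset of the support. -/
theorem defect_eq (ρ : Equiv.Perm ℕ) (hρ : (psupp ρ).Finite) {V : Set ℕ}
    (hV : V.Finite) (hsub : psupp ρ ⊆ V) :
    ((psupp ρ).ncard : ℤ) - numCycles ρ = (V.ncard : ℤ) - nclasses ρ.SameCycle V := by
  classical
  have hsplit : V = psupp ρ ∪ (V \ psupp ρ) := by
    rw [Set.union_diff_cancel hsub]
  have himg : cls ρ.SameCycle '' V =
      (cls ρ.SameCycle '' psupp ρ) ∪ ((fun x => ({x} : Set ℕ)) '' (V \ psupp ρ)) := by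
    conv_lhs => rw [hsplit]
    rw [Set.image_union]
    congr 1
    apply Set.image_congr
    intro x hx
    exact cls_sameCycle_of_fixed (not_not.mp hx.2)
  have hdisj : Disjoint (cls ρ.SameCycle '' psupp ρ) ((fun x => ({x} : Set ℕ)) '' (V \ psupp ρ)) := by
    rw [Set.disjoint_left]
    rintro S ⟨x, hx, rfl⟩ ⟨y, _, hy⟩
    have hxS : x ∈ cls ρ.SameCycle x := mem_cls_self (sameCycle_equivalence ρ) x
    have hρxS : ρ x ∈ cls ρ.SameCycle x := ⟨1, by simp⟩
    rw [← hy] at hxS hρxS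
    simp only [Set.mem_singleton_iff] at hxS hρxS
    exact hx (by rw [hρxS, hxS])
  have hcount : nclasses ρ.SameCycle V = numCycles ρ + (V \ psupp ρ).ncard := by
    rw [nclasses, himg, Set.ncard_union_eq hdisj (hρ.image _) (hV.diff.image _),
      numCycles_eq_nclasses, nclasses]
    congr 1
    exact Set.ncard_image_of_injOn (fun x _ y _ h => Set.singleton_eq_singleton_iff.mp h)
  have hd : (V \ psupp ρ).ncard = V.ncard - (psupp ρ).ncard := Set.ncard_diff hsub hρ
  have hle : (psupp ρ).ncard ≤ V.ncard := Set.ncard_le_ncard hsub hV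
  rw [hcount, hd]
  push_cast [hle]
  ring

/-- Z: transfer of `SameCycle ρ` along a relation with the one-step property. -/
theorem sameCycle_transfer {ρ : Equiv.Perm ℕ} {r' : ℕ → ℕ → Prop} (h' : Equivalence r')
    (hstep : ∀ z, r' z (ρ z)) : ∀ x y, ρ.SameCycle x y → r' x y := by
  have hstep' : ∀ z, r' (ρ⁻¹ z) z := by
    intro z
    have := hstep (ρ⁻¹ z)
    rwa [← Equiv.Perm.mul_apply, mul_inv_cancel, Equiv.Perm.one_apply] at this
  intro x y ⟨i, hi⟩
  subst hi
  induction i using Int.induction_on with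
  | zero => simpa using h'.refl x
  | succ i ih =>
    have : (ρ ^ ((i : ℤ) + 1)) x = ρ ((ρ ^ (i : ℤ)) x) := by
      rw [add_comm, zpow_add, zpow_one, Equiv.Perm.mul_apply]
    rw [this]
    exact h'.trans ih (hstep _)
  | pred i ih =>
    have : (ρ ^ (-(i : ℤ) - 1)) x = ρ⁻¹ ((ρ ^ (-(i : ℤ))) x) := by
      rw [sub_eq_add_neg, add_comm, zpow_add, zpow_neg_one, Equiv.Perm.mul_apply]
    rw [this]
    exact h'.trans ih (h'.symm (hstep' _))
/-- The defect (Cayley weight) of a permutation. -/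
noncomputable def defect (ρ : Equiv.Perm ℕ) : ℤ := ((psupp ρ).ncard : ℤ) - numCycles ρ

theorem exists_pos_period {ρ : Equiv.Perm ℕ} (h : (psupp ρ).Finite) (b : ℕ) :
    ∃ q : ℕ, 0 < q ∧ (ρ ^ q) b = b := by
  by_cases hb : ρ b = b
  · exact ⟨1, one_pos, by simpa⟩
  · have hmem : ∀ n : ℕ, (ρ ^ n) b ∈ psupp ρ := by
      intro n
      by_contra hfix
      have hfix' : ρ ((ρ ^ n) b) = (ρ ^ n) b := not_not.mp hfix
      have hcomm : ρ ((ρ ^ n) b) = (ρ ^ n) (ρ b) := by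
        rw [← Equiv.Perm.mul_apply, ← Equiv.Perm.mul_apply, (Commute.pow_self ρ n).eq]
      rw [hcomm] at hfix'
      exact hb ((ρ ^ n).injective hfix')
    have : Finite (psupp ρ) := h.to_subtype
    obtain ⟨m, n, hmn, heq⟩ := Finite.exists_ne_map_eq_of_infinite
      (fun n : ℕ => (⟨(ρ ^ n) b, hmem n⟩ : psupp ρ))
    have heq' : (ρ ^ m) b = (ρ ^ n) b := by simpa using heq
    rcases lt_or_gt_of_ne hmn with hlt | hlt
    · refine ⟨n - m, by omega, ?_⟩
      have : (ρ ^ m) ((ρ ^ (n - m)) b) = (ρ ^ m) b := by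
        rw [← Equiv.Perm.mul_apply, ← pow_add, show m + (n - m) = n by omega, ← heq']
      exact (ρ ^ m).injective this
    · refine ⟨m - n, by omega, ?_⟩
      have : (ρ ^ n) ((ρ ^ (m - n)) b) = (ρ ^ n) b := by
        rw [← Equiv.Perm.mul_apply, ← pow_add, show n + (m - n) = m by omega, heq']
      exact (ρ ^ n).injective this

/-- M3: if `a` and `b` are in different cycles of `ρ`, then `swap a b * ρ` joins them. -/
theorem sameCycle_swap_mul_of_not_sameCycle {ρ : Equiv.Perm ℕ} (h : (psupp ρ).Finite)
    {a b : ℕ} (hab : a ≠ b) (hnc : ¬ ρ.SameCycle a b) :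
    (Equiv.swap a b * ρ).SameCycle b a := by
  classical
  obtain ⟨q₀, hq₀⟩ := exists_pos_period h b
  set Q := fun q : ℕ => 0 < q ∧ (ρ ^ q) b = b
  have hexct : ∃ q, Q q := ⟨q₀, hq₀⟩
  set q := Nat.find hexct with hqdef
  obtain ⟨hqpos, hqb⟩ : Q q := Nat.find_spec hexct
  have hqmin : ∀ j, j < q → ¬ Q j := fun j hj => Nat.find_min hexct hj
  set τ := Equiv.swap a b with hτ
  have hstep : ∀ j, j < q → ((τ * ρ) ^ j) b = (ρ ^ j) b := by
    intro j
    induction j with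
    | zero => simp
    | succ j ih =>
      intro hj
      have hj' : j < q := Nat.lt_of_succ_lt hj
      have h1 : ((τ * ρ) ^ (j + 1)) b = (τ * ρ) (((τ * ρ) ^ j) b) := by
        rw [pow_succ', Equiv.Perm.mul_apply]
      rw [h1, ih hj', Equiv.Perm.mul_apply]
      have h2 : ρ ((ρ ^ j) b) = (ρ ^ (j + 1)) b := by
        rw [pow_succ', Equiv.Perm.mul_apply]
      rw [h2]
      have hne_b : (ρ ^ (j + 1)) b ≠ b := by
        intro hcon
        exact hqmin (j + 1) hj ⟨Nat.succ_pos j, hcon⟩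
      have hne_a : (ρ ^ (j + 1)) b ≠ a := by
        intro hcon
        exact hnc (Equiv.Perm.SameCycle.symm ⟨((j + 1 : ℕ) : ℤ), by rw [zpow_natCast, hcon]⟩)
      exact Equiv.swap_apply_of_ne_of_ne hne_a hne_b
  have hfinal : ((τ * ρ) ^ q) b = a := by
    have hq1 : q = (q - 1) + 1 := by omega
    rw [hq1, pow_succ', Equiv.Perm.mul_apply, hstep (q - 1) (by omega)]
    have h3 : ρ ((ρ ^ (q - 1)) b) = (ρ ^ q) b := by
      conv_rhs => rw [hq1]
      rw [pow_succ', Equiv.Perm.mul_apply]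
    rw [Equiv.Perm.mul_apply, h3, hqb]
    exact Equiv.swap_apply_right a b
  exact ⟨(q : ℤ), by rw [zpow_natCast, hfinal]⟩
/-- M1: `SameCycle (swap a b * ρ)` is contained in the merge of `SameCycle ρ` at `(a,b)`. -/
theorem sameCycle_swap_mul_le_merge {ρ : Equiv.Perm ℕ} (a b : ℕ) :
    ∀ x y, (Equiv.swap a b * ρ).SameCycle x y → mergeRel ρ.SameCycle a b x y := by
  have hstep : ∀ z, mergeRel ρ.SameCycle a b z ((Equiv.swap a b * ρ) z) := by
    intro z
    rw [Equiv.Perm.mul_apply]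
    by_cases hza : ρ z = a
    · rw [hza, Equiv.swap_apply_left]
      exact Or.inr (Or.inl ⟨⟨1, by simpa using hza⟩, Equiv.Perm.SameCycle.refl ρ b⟩)
    · by_cases hzb : ρ z = b
      · rw [hzb, Equiv.swap_apply_right]
        exact Or.inr (Or.inr ⟨⟨1, by simpa using hzb⟩, Equiv.Perm.SameCycle.refl ρ a⟩)
      · rw [Equiv.swap_apply_of_ne_of_ne hza hzb]
        exact Or.inl ⟨1, by simp⟩
  exact sameCycle_transfer
    (mergeRel_equivalence (sameCycle_equivalence ρ) a b) hstep

/-- M2: if `a,b` lie in different cycles of `ρ`, `SameCycle ρ ≤ SameCycle (swap a b * ρ)`. -/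
theorem sameCycle_le_swap_mul {ρ : Equiv.Perm ℕ} (h : (psupp ρ).Finite) {a b : ℕ}
    (hab : a ≠ b) (hnc : ¬ ρ.SameCycle a b) :
    ∀ x y, ρ.SameCycle x y → (Equiv.swap a b * ρ).SameCycle x y := by
  have hba : (Equiv.swap a b * ρ).SameCycle b a :=
    sameCycle_swap_mul_of_not_sameCycle h hab hnc
  have hstep : ∀ z, (Equiv.swap a b * ρ).SameCycle z (ρ z) := by
    intro z
    have h1 : (Equiv.swap a b * ρ).SameCycle z ((Equiv.swap a b * ρ) z) := ⟨1, by simp⟩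
    rw [Equiv.Perm.mul_apply] at h1
    by_cases hza : ρ z = a
    · rw [hza] at h1 ⊢
      rw [Equiv.swap_apply_left] at h1
      exact h1.trans hba
    · by_cases hzb : ρ z = b
      · rw [hzb] at h1 ⊢
        rw [Equiv.swap_apply_right] at h1
        exact h1.trans hba.symm
      · rwa [Equiv.swap_apply_of_ne_of_ne hza hzb] at h1
  exact sameCycle_transfer (sameCycle_equivalence _) hstep

theorem psupp_swap_mul_subset {ρ : Equiv.Perm ℕ} {a b : ℕ} :
    psupp (Equiv.swap a b * ρ) ⊆ psupp ρ ∪ {a, b} := by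
  intro z hz
  simp only [psupp, Set.mem_setOf_eq, Equiv.Perm.mul_apply] at hz
  by_cases hρz : ρ z = z
  · rw [hρz] at hz
    rcases Equiv.swap_apply_ne_self_iff.mp hz with ⟨_, h | h⟩ <;> simp [h]
  · exact Or.inl hρz

/-- H1: multiplying by a transposition increases the defect by at most one. -/
theorem defect_swap_mul_le {ρ : Equiv.Perm ℕ} (h : (psupp ρ).Finite) {a b : ℕ} (hab : a ≠ b) :
    defect (Equiv.swap a b * ρ) ≤ defect ρ + 1 := by
  classical
  set V : Set ℕ := psupp ρ ∪ {a, b} with hV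
  have hVfin : V.Finite := h.union ((Set.finite_singleton b).insert a)
  have hsub1 : psupp ρ ⊆ V := Set.subset_union_left
  have hsub2 : psupp (Equiv.swap a b * ρ) ⊆ V := psupp_swap_mul_subset
  have hfin2 : (psupp (Equiv.swap a b * ρ)).Finite := hVfin.subset hsub2
  have e1 : defect ρ = (V.ncard : ℤ) - nclasses ρ.SameCycle V := defect_eq ρ h hVfin hsub1
  have e2 : defect (Equiv.swap a b * ρ) =
      (V.ncard : ℤ) - nclasses (Equiv.swap a b * ρ).SameCycle V :=
    defect_eq _ hfin2 hVfin hsub2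
  have c1 : nclasses ρ.SameCycle V ≤ nclasses (mergeRel ρ.SameCycle a b) V + 1 :=
    nclasses_le_merge_add_one (sameCycle_equivalence ρ) a b hVfin
  have c2 : nclasses (mergeRel ρ.SameCycle a b) V ≤
      nclasses (Equiv.swap a b * ρ).SameCycle V :=
    nclasses_coarser_le (sameCycle_equivalence _)
      (mergeRel_equivalence (sameCycle_equivalence ρ) a b)
      (sameCycle_swap_mul_le_merge a b) hVfin
  rw [e1, e2]
  omega

/-- H2: joining two distinct cycles increases the defect by (at least) one. -/
theorem defect_swap_mul_ge {ρ : Equiv.Perm ℕ} (h : (psupp ρ).Finite) {a b : ℕ}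
    (hab : a ≠ b) (hnc : ¬ ρ.SameCycle a b) :
    defect ρ + 1 ≤ defect (Equiv.swap a b * ρ) := by
  classical
  set V : Set ℕ := psupp ρ ∪ {a, b} with hV
  have hVfin : V.Finite := h.union ((Set.finite_singleton b).insert a)
  have hsub1 : psupp ρ ⊆ V := Set.subset_union_left
  have hsub2 : psupp (Equiv.swap a b * ρ) ⊆ V := psupp_swap_mul_subset
  have hfin2 : (psupp (Equiv.swap a b * ρ)).Finite := hVfin.subset hsub2
  have e1 : defect ρ = (V.ncard : ℤ) - nclasses ρ.SameCycle V := defect_eq ρ h hVfin hsub1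
  have e2 : defect (Equiv.swap a b * ρ) =
      (V.ncard : ℤ) - nclasses (Equiv.swap a b * ρ).SameCycle V :=
    defect_eq _ hfin2 hVfin hsub2
  have haV : a ∈ V := Or.inr (by simp)
  have hbV : b ∈ V := Or.inr (by simp)
  have c1 : nclasses (Equiv.swap a b * ρ).SameCycle V + 1 ≤ nclasses ρ.SameCycle V :=
    nclasses_add_one_le_of_merge (sameCycle_equivalence ρ) (sameCycle_equivalence _)
      (sameCycle_le_swap_mul h hab hnc) hnc
      ((sameCycle_swap_mul_of_not_sameCycle h hab hnc).symm) hVfin haV hbV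
  rw [e1, e2]
  omega
/-- The orbit relation of the subgroup generated by a set of permutations. -/
def orelS (S : Set (Equiv.Perm ℕ)) (x y : ℕ) : Prop := ∃ g ∈ Subgroup.closure S, g x = y

theorem orelS_equivalence (S : Set (Equiv.Perm ℕ)) : Equivalence (orelS S) := by
  constructor
  · exact fun x => ⟨1, Subgroup.one_mem _, rfl⟩
  · rintro x y ⟨g, hg, rfl⟩
    exact ⟨g⁻¹, Subgroup.inv_mem _ hg, g.symm_apply_apply x⟩
  · rintro x y z ⟨g, hg, rfl⟩ ⟨k, hk, rfl⟩
    exact ⟨k * g, Subgroup.mul_mem _ hk hg, rfl⟩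

theorem orelS_mono {S T : Set (Equiv.Perm ℕ)} (h : S ⊆ Subgroup.closure T) :
    ∀ x y, orelS S x y → orelS T x y := by
  rintro x y ⟨g, hg, rfl⟩
  exact ⟨g, (Subgroup.closure_le _).mpr h hg, rfl⟩

theorem orelS_fixed {S : Set (Equiv.Perm ℕ)} {x : ℕ} (h : ∀ g ∈ S, g x = x) {y : ℕ}
    (hxy : orelS S x y) : x = y := by
  obtain ⟨g, hg, rfl⟩ := hxy
  refine (Subgroup.closure_induction (p := fun g _ => g x = x) h rfl ?_ ?_ hg).symm
  · intro g k _ _ hgx hkx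
    rw [Equiv.Perm.mul_apply, hkx, hgx]
  · intro g _ hgx
    conv_lhs => rw [← hgx]
    exact g.symm_apply_apply x

theorem sameCycle_le_orelS {S : Set (Equiv.Perm ℕ)} {g : Equiv.Perm ℕ}
    (hg : g ∈ Subgroup.closure S) : ∀ x y, g.SameCycle x y → orelS S x y := by
  rintro x y ⟨i, rfl⟩
  exact ⟨g ^ i, Subgroup.zpow_mem _ hg i, rfl⟩

theorem orelS_singleton {g : Equiv.Perm ℕ} {x y : ℕ} :
    orelS {g} x y ↔ g.SameCycle x y := by
  constructor
  · rintro ⟨k, hk, hky⟩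
    obtain ⟨i, hi⟩ := Subgroup.mem_closure_singleton.mp hk
    exact ⟨i, by rw [hi, hky]⟩
  · rintro ⟨i, hi⟩
    exact ⟨g ^ i, Subgroup.zpow_mem _ (Subgroup.subset_closure (Set.mem_singleton g)) i, hi⟩

/-- Merging description of the orbit relation after inserting a transposition. -/
theorem orelS_insert_swap {S : Set (Equiv.Perm ℕ)} {a b : ℕ} (hab : a ≠ b) :
    ∀ x y, orelS (insert (Equiv.swap a b) S) x y ↔ mergeRel (orelS S) a b x y := by
  have heq := orelS_equivalence S
  intro x y
  constructor
  · rintro ⟨g, hg, rfl⟩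
    refine Subgroup.closure_induction
      (p := fun g _ => ∀ z, mergeRel (orelS S) a b z (g z)) ?_ ?_ ?_ ?_ hg x
    · rintro g (rfl | hgS) z
      · by_cases hza : z = a
        · rw [hza, Equiv.swap_apply_left]
          exact Or.inr (Or.inl ⟨heq.refl a, heq.refl b⟩)
        · by_cases hzb : z = b
          · rw [hzb, Equiv.swap_apply_right]
            exact Or.inr (Or.inr ⟨heq.refl b, heq.refl a⟩)
          · rw [Equiv.swap_apply_of_ne_of_ne hza hzb]
            exact Or.inl (heq.refl z)
      · exact Or.inl ⟨g, Subgroup.subset_closure hgS, rfl⟩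
    · intro z
      exact Or.inl (heq.refl z)
    · intro g k _ _ hgz hkz z
      exact (mergeRel_equivalence heq a b).trans (hkz z) (hgz (k z))
    · intro g _ hgz z
      have := hgz (g⁻¹ z)
      rw [← Equiv.Perm.mul_apply, mul_inv_cancel, Equiv.Perm.one_apply] at this
      exact (mergeRel_equivalence heq a b).symm this
  · have hmono : ∀ x y, orelS S x y → orelS (insert (Equiv.swap a b) S) x y :=
      orelS_mono (fun g hg => Subgroup.subset_closure (Set.mem_insert_of_mem _ hg))
    have hab' : orelS (insert (Equiv.swap a b) S) a b :=
      ⟨Equiv.swap a b, Subgroup.subset_closure (Set.mem_insert _ _), Equiv.swap_apply_left a b⟩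
    have heq' := orelS_equivalence (insert (Equiv.swap a b) S)
    rintro (h1 | ⟨h1, h2⟩ | ⟨h1, h2⟩)
    · exact hmono _ _ h1
    · exact heq'.trans (hmono _ _ h1) (heq'.trans hab' (heq'.symm (hmono _ _ h2)))
    · exact heq'.trans (hmono _ _ h1) (heq'.trans (heq'.symm hab') (heq'.symm (hmono _ _ h2)))

/-- The moved points of a list of permutations. -/
def Vl (l : List (Equiv.Perm ℕ)) : Set ℕ := {x | ∃ g ∈ l, g x ≠ x}

/-- The orbit relation generated by a list of permutations. -/
def orell (l : List (Equiv.Perm ℕ)) : ℕ → ℕ → Prop := orelS {g | g ∈ l}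

theorem psupp_swap {a b : ℕ} (hab : a ≠ b) : psupp (Equiv.swap a b) = {a, b} := by
  ext x
  simp only [psupp, Set.mem_setOf_eq, Equiv.swap_apply_ne_self_iff, Set.mem_insert_iff,
    Set.mem_singleton_iff]
  tauto

theorem Vl_nil : Vl [] = ∅ := by
  ext x; simp [Vl]

theorem Vl_cons {t : Equiv.Perm ℕ} {l : List (Equiv.Perm ℕ)} :
    Vl (t :: l) = psupp t ∪ Vl l := by
  ext x
  simp only [Vl, psupp, Set.mem_setOf_eq, List.mem_cons, Set.mem_union]
  constructor
  · rintro ⟨g, (rfl | hg), hgx⟩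
    · exact Or.inl hgx
    · exact Or.inr ⟨g, hg, hgx⟩
  · rintro (h | ⟨g, hg, hgx⟩)
    · exact ⟨t, Or.inl rfl, h⟩
    · exact ⟨g, Or.inr hg, hgx⟩

theorem Vl_finite {l : List (Equiv.Perm ℕ)}
    (hl : ∀ g ∈ l, ∃ a b, a ≠ b ∧ g = Equiv.swap a b) : (Vl l).Finite := by
  induction l with
  | nil => rw [Vl_nil]; exact Set.finite_empty
  | cons t l ih =>
    rw [Vl_cons]
    have hl' := fun g hg => hl g (List.mem_cons_of_mem t hg)
    obtain ⟨a, b, hab, rfl⟩ := hl t (List.mem_cons_self)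
    refine Set.Finite.union ?_ (ih hl')
    rw [psupp_swap hab]
    exact (Set.finite_singleton b).insert a

theorem prod_fixed {l : List (Equiv.Perm ℕ)} {x : ℕ} (h : ∀ g ∈ l, g x = x) :
    l.prod x = x := by
  induction l with
  | nil => simp
  | cons t l ih =>
    rw [List.prod_cons, Equiv.Perm.mul_apply, ih fun g hg => h g (List.mem_cons_of_mem t hg)]
    exact h t (List.mem_cons_self)

theorem psupp_prod_subset (l : List (Equiv.Perm ℕ)) : psupp l.prod ⊆ Vl l := by
  intro x hx
  by_contra hxV
  simp only [Vl, Set.mem_setOf_eq, not_exists, not_and, ne_eq, not_not] at hxV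
  exact hx (prod_fixed hxV)

theorem orell_cons_swap {l : List (Equiv.Perm ℕ)} {a b : ℕ} (hab : a ≠ b) :
    ∀ x y, orell (Equiv.swap a b :: l) x y ↔ mergeRel (orell l) a b x y := by
  intro x y
  have hset : {g : Equiv.Perm ℕ | g ∈ Equiv.swap a b :: l} =
      insert (Equiv.swap a b) {g | g ∈ l} := by
    ext g; simp [List.mem_cons]
  rw [orell, hset]
  exact orelS_insert_swap hab x y

theorem mem_Vl_of_orell {l : List (Equiv.Perm ℕ)} {a b : ℕ} (hab : a ≠ b)
    (h : orell l a b) : a ∈ Vl l := by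
  by_contra ha
  simp only [Vl, Set.mem_setOf_eq, not_exists, not_and, ne_eq, not_not] at ha
  exact hab (orelS_fixed ha h)

theorem sameCycle_prod_le_orell (l : List (Equiv.Perm ℕ)) :
    ∀ x y, l.prod.SameCycle x y → orell l x y := by
  have hmem : l.prod ∈ Subgroup.closure {g : Equiv.Perm ℕ | g ∈ l} :=
    list_prod_mem (fun x hx => Subgroup.subset_closure hx)
  exact sameCycle_le_orelS hmem
theorem mergeRel_comm {r : ℕ → ℕ → Prop} (a b : ℕ) : mergeRel r a b = mergeRel r b a := by
  funext x y
  simp only [mergeRel, eq_iff_iff]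
  tauto

theorem cls_singleton_iff {r : ℕ → ℕ → Prop} (h : Equivalence r) {a : ℕ}
    (ha : cls r a = {a}) : ∀ u, r u a → u = a := by
  intro u hu
  have : u ∈ cls r a := h.symm hu
  rwa [ha] at this

/-- Auxiliary: merging rank bound in the case `a ∉ W`, `b ∈ W`. -/
theorem merge_rank_le_aux {r : ℕ → ℕ → Prop} (h : Equivalence r) {W : Set ℕ}
    (hW : W.Finite) {a b : ℕ} (hab : a ≠ b) (haW : a ∉ W) (hbW : b ∈ W)
    (hcls : cls r a = {a}) :
    ((insert a (insert b W)).ncard : ℤ) -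
        nclasses (mergeRel r a b) (insert a (insert b W)) ≤
      (W.ncard : ℤ) - nclasses r W + 1 := by
  classical
  have h' : Equivalence (mergeRel r a b) := mergeRel_equivalence h a b
  have hle := le_mergeRel (r := r) a b
  have hW2eq : insert a (insert b W) = insert a W := by rw [Set.insert_eq_of_mem hbW]
  have hW2fin : (insert a W).Finite := hW.insert a
  have hcard : (insert a W).ncard = W.ncard + 1 := Set.ncard_insert_of_notMem haW hW
  have hnotra : ∀ u ∈ W, ¬ r u a := by
    intro u hu hua
    exact haW ((cls_singleton_iff h hcls u hua) ▸ hu)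
  set F : Set ℕ → Set ℕ := fun S => ⋃ y ∈ S, cls (mergeRel r a b) y with hF
  have hFc : ∀ x : ℕ, F (cls r x) = cls (mergeRel r a b) x := biUnion_cls h h' hle
  have hinj : Set.InjOn F (cls r '' W) := by
    rintro S ⟨x, hxW, rfl⟩ S' ⟨x', hx'W, rfl⟩ hFS
    rw [hFc, hFc] at hFS
    by_cases hxb : r x b
    · by_cases hx'b : r x' b
      · rw [cls_eq_of_rel h hxb, cls_eq_of_rel h hx'b]
      · rw [cls_mergeRel_of_touched h (Or.inr hxb),
          cls_mergeRel_of_untouched h (hnotra x' hx'W) hx'b] at hFS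
        have : a ∈ cls r x' := by
          rw [← hFS]
          exact Or.inl (mem_cls_self h a)
        exact absurd this (hnotra x' hx'W)
    · by_cases hx'b : r x' b
      · rw [cls_mergeRel_of_touched h (Or.inr hx'b),
          cls_mergeRel_of_untouched h (hnotra x hxW) hxb] at hFS
        have : a ∈ cls r x := by
          rw [hFS]
          exact Or.inl (mem_cls_self h a)
        exact absurd this (hnotra x hxW)
      · rw [cls_mergeRel_of_untouched h (hnotra x hxW) hxb,
          cls_mergeRel_of_untouched h (hnotra x' hx'W) hx'b] at hFS
        exact hFS
  have hkey : nclasses r W ≤ nclasses (mergeRel r a b) (insert a W) := by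
    have e1 : nclasses r W = (F '' (cls r '' W)).ncard :=
      (Set.ncard_image_of_injOn hinj).symm
    have e2 : F '' (cls r '' W) = cls (mergeRel r a b) '' W :=
      (image_cls_coarser h h' hle W).symm
    rw [e1, e2]
    exact nclasses_mono hW2fin (Set.subset_insert a W)
  rw [hW2eq, hcard]
  push_cast
  omega

/-- The merging rank bound. -/
theorem merge_rank_le {r : ℕ → ℕ → Prop} (h : Equivalence r) {W : Set ℕ}
    (hW : W.Finite) {a b : ℕ} (hab : a ≠ b) (hnab : ¬ r a b)
    (haW : a ∈ W ∨ cls r a = {a}) (hbW : b ∈ W ∨ cls r b = {b}) :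
    ((insert a (insert b W)).ncard : ℤ) -
        nclasses (mergeRel r a b) (insert a (insert b W)) ≤
      (W.ncard : ℤ) - nclasses r W + 1 := by
  classical
  have h' : Equivalence (mergeRel r a b) := mergeRel_equivalence h a b
  by_cases haW' : a ∈ W
  · by_cases hbW' : b ∈ W
    · have hW2 : insert a (insert b W) = W := by
        rw [Set.insert_eq_of_mem hbW', Set.insert_eq_of_mem haW']
      rw [hW2]
      have := nclasses_le_merge_add_one h a b hW
      omega
    · have hclsb : cls r b = {b} := hbW.resolve_left hbW'
      rw [mergeRel_comm, Set.insert_comm]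
      exact merge_rank_le_aux h hW hab.symm hbW' haW' hclsb
  · have hclsa : cls r a = {a} := haW.resolve_left haW'
    by_cases hbW' : b ∈ W
    · exact merge_rank_le_aux h hW hab haW' hbW' hclsa
    · -- both outside
      have hclsb : cls r b = {b} := hbW.resolve_left hbW'
      have hbW2 : b ∉ W := hbW'
      have hanbW : a ∉ insert b W := by
        intro hmem
        rcases hmem with rfl | hmem
        · exact hab rfl
        · exact haW' hmem
      have hcard : (insert a (insert b W)).ncard = W.ncard + 2 := by
        rw [Set.ncard_insert_of_notMem hanbW (hW.insert b),
          Set.ncard_insert_of_notMem hbW2 hW]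
      have huntouched : ∀ x ∈ W, cls (mergeRel r a b) x = cls r x := by
        intro x hx
        refine cls_mergeRel_of_untouched h ?_ ?_
        · intro hxa
          exact haW' ((cls_singleton_iff h hclsa x hxa) ▸ hx)
        · intro hxb
          exact hbW' ((cls_singleton_iff h hclsb x hxb) ▸ hx)
      have himgW : cls (mergeRel r a b) '' W = cls r '' W := Set.image_congr huntouched
      have hclsa' : cls (mergeRel r a b) a = {a, b} := by
        rw [cls_mergeRel_of_touched h (Or.inl (h.refl a)), hclsa, hclsb]
        ext z; simp [or_comm]
      have hnotmem : cls (mergeRel r a b) a ∉ cls r '' W := by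
        rw [hclsa']
        rintro ⟨x, hxW, hx⟩
        have : x ∈ ({a, b} : Set ℕ) := by rw [← hx]; exact mem_cls_self h x
        rcases this with rfl | hxb
        · exact haW' hxW
        · rw [Set.mem_singleton_iff] at hxb
          subst hxb
          exact hbW' hxW
      have hsub : insert (cls (mergeRel r a b) a) (cls r '' W) ⊆
          cls (mergeRel r a b) '' (insert a (insert b W)) := by
        rintro S (rfl | hS)
        · exact ⟨a, Set.mem_insert a _, rfl⟩
        · rw [← himgW] at hS
          obtain ⟨x, hxW, rfl⟩ := hS
          exact ⟨x, Set.mem_insert_of_mem _ (Set.mem_insert_of_mem _ hxW), rfl⟩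
      have hfin2 : (insert a (insert b W)).Finite := (hW.insert b).insert a
      have hkey : nclasses r W + 1 ≤ nclasses (mergeRel r a b) (insert a (insert b W)) := by
        have e1 : (insert (cls (mergeRel r a b) a) (cls r '' W)).ncard =
            nclasses r W + 1 := Set.ncard_insert_of_notMem hnotmem (hW.image _)
        calc nclasses r W + 1 = _ := e1.symm
          _ ≤ _ := Set.ncard_le_ncard hsub (hfin2.image _)
      rw [hcard]
      push_cast
      omega

/-- The number of orbit classes of a transposition list on its moved points. -/
noncomputable def qgraph (l : List (Equiv.Perm ℕ)) : ℕ := nclasses (orell l) (Vl l)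

theorem psupp_one : psupp (1 : Equiv.Perm ℕ) = ∅ := by
  ext x; simp [psupp]

theorem numCycles_one : numCycles (1 : Equiv.Perm ℕ) = 0 := by
  rw [numCycles_eq_nclasses, psupp_one, nclasses]
  simp

theorem defect_one : defect (1 : Equiv.Perm ℕ) = 0 := by
  rw [defect, psupp_one, numCycles_one, Set.ncard_empty]
  simp

/-- The genus bound for lists of transpositions. -/
theorem genus_bound : ∀ l : List (Equiv.Perm ℕ),
    (∀ g ∈ l, ∃ a b, a ≠ b ∧ g = Equiv.swap a b) →
    2 * ((Vl l).ncard : ℤ) ≤ (l.length : ℤ) + defect l.prod + 2 * (qgraph l : ℤ) := by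
  intro l
  induction l with
  | nil =>
    intro _
    rw [Vl_nil, List.prod_nil, defect_one]
    simp
  | cons t l ih =>
    intro hl
    have hl' : ∀ g ∈ l, ∃ a b, a ≠ b ∧ g = Equiv.swap a b :=
      fun g hg => hl g (List.mem_cons_of_mem t hg)
    obtain ⟨a, b, hab, rfl⟩ := hl t (List.mem_cons_self)
    have hVfin : (Vl l).Finite := Vl_finite hl'
    have hsuppfin : (psupp l.prod).Finite := hVfin.subset (psupp_prod_subset l)
    have hihl := ih hl'
    rw [show qgraph l = nclasses (orell l) (Vl l) from rfl] at hihl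
    have hVcons : Vl (Equiv.swap a b :: l) = insert a (insert b (Vl l)) := by
      rw [Vl_cons, psupp_swap hab]
      ext z
      simp only [Set.mem_union, Set.mem_insert_iff, Set.mem_singleton_iff]
      tauto
    have hprod : (Equiv.swap a b :: l).prod = Equiv.swap a b * l.prod := List.prod_cons
    have hclse : ∀ x : ℕ, cls (orell (Equiv.swap a b :: l)) x =
        cls (mergeRel (orell l) a b) x := by
      intro x
      ext y
      exact orell_cons_swap hab x y
    have hq : qgraph (Equiv.swap a b :: l) =
        nclasses (mergeRel (orell l) a b) (insert a (insert b (Vl l))) := by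
      rw [qgraph, hVcons, nclasses, nclasses]
      congr 1
      exact Set.image_congr (fun x _ => hclse x)
    have heq : Equivalence (orell l) := orelS_equivalence {g : Equiv.Perm ℕ | g ∈ l}
    by_cases hcon : orell l a b
    · -- a and b already connected
      have haV : a ∈ Vl l := mem_Vl_of_orell hab hcon
      have hbV : b ∈ Vl l := mem_Vl_of_orell hab.symm (heq.symm hcon)
      have hins : insert a (insert b (Vl l)) = Vl l := by
        rw [Set.insert_eq_of_mem hbV, Set.insert_eq_of_mem haV]
      have hmerge : mergeRel (orell l) a b = orell l := mergeRel_eq_of_rel heq hcon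
      have hdef : defect l.prod ≤ defect (Equiv.swap a b * l.prod) + 1 := by
        have hfin2 : (psupp (Equiv.swap a b * l.prod)).Finite :=
          (hsuppfin.union ((Set.finite_singleton b).insert a)).subset psupp_swap_mul_subset
        have := defect_swap_mul_le hfin2 hab (ρ := Equiv.swap a b * l.prod)
        rwa [← mul_assoc, Equiv.swap_mul_self, one_mul] at this
      rw [hVcons, hins, hprod, hq, hins, hmerge]
      simp only [List.length_cons]
      push_cast
      omega
    · -- a and b in different components
      have hnc : ¬ l.prod.SameCycle a b :=
        fun hsc => hcon (sameCycle_prod_le_orell l a b hsc)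
      have hdef : defect l.prod + 1 ≤ defect (Equiv.swap a b * l.prod) :=
        defect_swap_mul_ge hsuppfin hab hnc
      have hsing : ∀ c : ℕ, c ∉ Vl l → cls (orell l) c = {c} := by
        intro c hc
        ext z
        simp only [cls, Set.mem_setOf_eq, Set.mem_singleton_iff]
        constructor
        · intro hz
          refine (orelS_fixed ?_ hz).symm
          intro g hg
          by_contra hgz
          exact hc ⟨g, hg, hgz⟩
        · rintro rfl
          exact heq.refl z
      have hrank := merge_rank_le heq hVfin hab hcon
        (or_iff_not_imp_left.mpr (fun h => hsing a h))
        (or_iff_not_imp_left.mpr (fun h => hsing b h))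
      rw [hVcons, hprod, hq]
      simp only [List.length_cons]
      push_cast
      omega
theorem eq_one_of_psupp_empty {ρ : Equiv.Perm ℕ} (h : psupp ρ = ∅) : ρ = 1 := by
  ext x
  by_contra hx
  exact absurd (Set.eq_empty_iff_forall_notMem.mp h x) (by simpa [psupp] using hx)

/-- Every finitely supported permutation has a swap factorization of length at most its defect. -/
theorem exists_swap_factorization_aux : ∀ (n : ℕ) (ρ : Equiv.Perm ℕ), (psupp ρ).Finite →
    (psupp ρ).ncard ≤ n →
    ∃ L : List (Equiv.Perm ℕ), (∀ g ∈ L, ∃ a b, a ≠ b ∧ g = Equiv.swap a b) ∧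
      L.prod = ρ ∧ (L.length : ℤ) ≤ defect ρ := by
  intro n
  induction n with
  | zero =>
    intro ρ hfin hcard
    have hempty : psupp ρ = ∅ := by
      rw [← Set.ncard_eq_zero hfin] at *
      omega
    rw [eq_one_of_psupp_empty hempty]
    exact ⟨[], by simp, List.prod_nil, by rw [defect_one]; simp⟩
  | succ n ihn =>
    intro ρ hfin hcard
    by_cases hempty : psupp ρ = ∅
    · rw [eq_one_of_psupp_empty hempty]
      exact ⟨[], by simp, List.prod_nil, by rw [defect_one]; simp⟩
    · obtain ⟨x, hx⟩ := Set.nonempty_iff_ne_empty.mpr hempty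
      have hxρ : ρ x ≠ x := hx
      set τ := Equiv.swap x (ρ x) with hτ
      set ρ' := τ * ρ with hρ'
      have hfix : ρ' x = x := by
        rw [hρ', Equiv.Perm.mul_apply, hτ, Equiv.swap_apply_right]
      have hsub : psupp ρ' ⊆ psupp ρ \ {x} := by
        intro z hz
        constructor
        · by_contra hzρ
          have hzρ' : ρ z = z := not_not.mp (fun hh => hzρ hh)
          have hzx : z ≠ x := fun hzx => (hzx ▸ hz : ρ' x ≠ x) hfix
          have hzρx : z ≠ ρ x := by
            intro hzρx
            have hzz : ρ z = ρ x := by rw [hzρ']; exact hzρx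
            exact hzx (ρ.injective hzz)
          apply hz
          rw [hρ', Equiv.Perm.mul_apply, hzρ', hτ, Equiv.swap_apply_of_ne_of_ne hzx hzρx]
        · intro hzx
          rw [Set.mem_singleton_iff] at hzx
          exact (hzx ▸ hz : ρ' x ≠ x) hfix
      have hfin' : (psupp ρ').Finite := hfin.diff.subset hsub
      have hcard' : (psupp ρ').ncard ≤ n := by
        have h1 : (psupp ρ').ncard ≤ (psupp ρ \ {x}).ncard :=
          Set.ncard_le_ncard hsub hfin.diff
        have h2 : (psupp ρ \ {x}).ncard = (psupp ρ).ncard - 1 :=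
          Set.ncard_diff_singleton_of_mem hx
        have h3 : 1 ≤ (psupp ρ).ncard := (Set.ncard_pos hfin).mpr ⟨x, hx⟩
        omega
      obtain ⟨L', hL'sw, hL'prod, hL'len⟩ := ihn ρ' hfin' hcard'
      have hne : x ≠ ρ x := fun h => hxρ h.symm
      have hnc : ¬ ρ'.SameCycle x (ρ x) := by
        rintro ⟨i, hi⟩
        rw [zpow_apply_eq_self_of_apply_eq_self hfix i] at hi
        exact hxρ hi.symm
      have hdef : defect ρ' + 1 ≤ defect ρ := by
        have h2 := defect_swap_mul_ge hfin' hne hnc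
        rwa [hρ', ← mul_assoc, hτ, Equiv.swap_mul_self, one_mul] at h2
      refine ⟨τ :: L', ?_, ?_, ?_⟩
      · intro g hg
        rcases List.mem_cons.mp hg with rfl | hg'
        · exact ⟨x, ρ x, hne, hτ⟩
        · exact hL'sw g hg'
      · rw [List.prod_cons, hL'prod, hρ', ← mul_assoc, hτ, Equiv.swap_mul_self, one_mul]
      · simp only [List.length_cons]
        push_cast
        omega

theorem exists_swap_factorization (ρ : Equiv.Perm ℕ) (hfin : (psupp ρ).Finite) :
    ∃ L : List (Equiv.Perm ℕ), (∀ g ∈ L, ∃ a b, a ≠ b ∧ g = Equiv.swap a b) ∧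
      L.prod = ρ ∧ (L.length : ℤ) ≤ defect ρ :=
  exists_swap_factorization_aux (psupp ρ).ncard ρ hfin le_rfl
theorem nclasses_orelS_singleton (g : Equiv.Perm ℕ) (W : Set ℕ) :
    nclasses (orelS {g}) W = nclasses g.SameCycle W := by
  rw [nclasses, nclasses]
  congr 1
  apply Set.image_congr
  intro x _
  ext y
  exact orelS_singleton

/-- The walk bound: orbit classes along a walk in the intersection graph. -/
theorem walk_bound {r : ℕ} (σ : Fin r → Equiv.Perm ℕ) (hfin : ∀ j, (psupp (σ j)).Finite)
    {u v : Fin r} (w : (intersectGraph σ).Walk u v) :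
    nclasses (orelS (σ '' ↑w.support.toFinset)) (⋃ j ∈ w.support.toFinset, psupp (σ j)) +
      w.support.toFinset.card ≤ (∑ j ∈ w.support.toFinset, numCycles (σ j)) + 1 := by
  classical
  induction w with
  | nil =>
    rename_i u'
    simp only [SimpleGraph.Walk.support_nil, List.toFinset_cons, List.toFinset_nil,
      insert_empty_eq]
    rw [Finset.card_singleton, Finset.sum_singleton]
    have h1 : (σ '' ↑({u'} : Finset (Fin r))) = {σ u'} := by simp
    have h2 : (⋃ j ∈ ({u'} : Finset (Fin r)), psupp (σ j)) = psupp (σ u') := by simp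
    rw [h1, h2, nclasses_orelS_singleton, ← numCycles_eq_nclasses]
  | @cons a b c hadj p ih =>
    simp only [SimpleGraph.Walk.support_cons, List.toFinset_cons]
    by_cases haT : a ∈ p.support.toFinset
    · rw [Finset.insert_eq_self.mpr haT]
      exact ih
    · set T' := p.support.toFinset with hT'
      have hbT' : b ∈ T' := by
        rw [hT', List.mem_toFinset]
        exact p.start_mem_support
      -- extract a common moved point
      have hadj' := hadj
      rw [intersectGraph, SimpleGraph.fromRel_adj] at hadj'
      obtain ⟨hne, hint⟩ := hadj'
      have hx₀ : ∃ x₀, x₀ ∈ psupp (σ a) ∧ x₀ ∈ psupp (σ b) := by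
        rcases hint with ⟨x₀, hx₀⟩ | ⟨x₀, hx₀⟩
        · exact ⟨x₀, hx₀.1, hx₀.2⟩
        · exact ⟨x₀, hx₀.2, hx₀.1⟩
      obtain ⟨x₀, hx₀a, hx₀b⟩ := hx₀
      set W := ⋃ j ∈ T', psupp (σ j) with hW
      have hWfin : W.Finite := Set.Finite.biUnion T'.finite_toSet (fun j _ => hfin j)
      have hW'fin : (psupp (σ a)).Finite := hfin a
      have hx₀W : x₀ ∈ W := Set.mem_biUnion hbT' hx₀b
      have hUnion : (⋃ j ∈ insert a T', psupp (σ j)) = W ∪ psupp (σ a) := by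
        rw [Finset.set_biUnion_insert, Set.union_comm]
      have hr := orelS_equivalence (σ '' ↑T')
      have hs := sameCycle_equivalence (σ a)
      have hR := orelS_equivalence (σ '' ↑(insert a T'))
      have hsub : (σ '' ↑T') ⊆ σ '' ↑(insert a T') := by
        apply Set.image_mono
        intro j hj
        simp only [Finset.coe_insert, Set.mem_insert_iff]
        exact Or.inr hj
      have hrR : ∀ x y, orelS (σ '' ↑T') x y → orelS (σ '' ↑(insert a T')) x y :=
        orelS_mono (fun g hg => Subgroup.subset_closure (hsub hg))
      have hsR : ∀ x y, (σ a).SameCycle x y → orelS (σ '' ↑(insert a T')) x y := by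
        apply sameCycle_le_orelS
        apply Subgroup.subset_closure
        exact ⟨a, by simp, rfl⟩
      have hjoin := nclasses_join_le hr hs hR hrR hsR hWfin hW'fin
        (Set.mem_inter hx₀W hx₀a)
      rw [← numCycles_eq_nclasses] at hjoin
      have hcard : (insert a T').card = T'.card + 1 := Finset.card_insert_of_notMem haT
      have hsum : (∑ j ∈ insert a T', numCycles (σ j)) =
          numCycles (σ a) + ∑ j ∈ T', numCycles (σ j) := Finset.sum_insert haT
      rw [hUnion, hcard, hsum]
      omega

theorem exists_covering_walk {V : Type*} [Fintype V] {G : SimpleGraph V}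
    (hconn : G.Connected) : ∃ (u v : V) (w : G.Walk u v), ∀ x, x ∈ w.support := by
  classical
  obtain ⟨u⟩ := hconn.nonempty
  have key : ∀ L : List V, ∃ (v : V) (w : G.Walk u v), ∀ x ∈ L, x ∈ w.support := by
    intro L
    induction L with
    | nil => exact ⟨u, SimpleGraph.Walk.nil, by simp⟩
    | cons a L ihL =>
      obtain ⟨v, w, hw⟩ := ihL
      obtain ⟨w2⟩ := hconn.preconnected v a
      refine ⟨a, w.append w2, ?_⟩
      intro x hx
      rcases List.mem_cons.mp hx with rfl | hxL
      · exact (w.append w2).end_mem_support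
      · exact SimpleGraph.Walk.subset_support_append_left _ _ (hw x hxL)
  obtain ⟨v, w, hw⟩ := key Finset.univ.toList
  exact ⟨u, v, w, fun x => hw x (by simp)⟩

/-- Connectivity bound on the number of orbit classes of the full family. -/
theorem conn_bound {r : ℕ} (σ : Fin r → Equiv.Perm ℕ) (hfin : ∀ j, (psupp (σ j)).Finite)
    (hconn : (intersectGraph σ).Connected) :
    nclasses (orelS (Set.range σ)) (⋃ j, psupp (σ j)) + r ≤
      (∑ j, numCycles (σ j)) + 1 := by
  classical
  obtain ⟨u, v, w, hw⟩ := exists_covering_walk hconn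
  have hT : w.support.toFinset = Finset.univ := by
    apply Finset.eq_univ_iff_forall.mpr
    intro j
    rw [List.mem_toFinset]
    exact hw j
  have hb := walk_bound σ hfin w
  rw [hT] at hb
  have h1 : (σ '' ↑(Finset.univ : Finset (Fin r))) = Set.range σ := by
    rw [Finset.coe_univ, Set.image_univ]
  have h2 : (⋃ j ∈ (Finset.univ : Finset (Fin r)), psupp (σ j)) = ⋃ j, psupp (σ j) := by
    simp
  have h3 : (Finset.univ : Finset (Fin r)).card = r := by simp
  rw [h1, h2, h3] at hb
  exact hb
theorem reverse_prod_of_swaps : ∀ l : List (Equiv.Perm ℕ),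
    (∀ g ∈ l, ∃ a b, a ≠ b ∧ g = Equiv.swap a b) → l.reverse.prod = l.prod⁻¹ := by
  intro l
  induction l with
  | nil => simp
  | cons t l ih =>
    intro hl
    have hl' : ∀ g ∈ l, ∃ a b, a ≠ b ∧ g = Equiv.swap a b :=
      fun g hg => hl g (List.mem_cons_of_mem t hg)
    obtain ⟨a, b, hab,ht⟩ := hl t (List.mem_cons_self)
    rw [List.reverse_cons, List.prod_append, List.prod_cons, List.prod_cons,
      List.prod_nil, mul_one, ih hl', mul_inv_rev, ht, Equiv.swap_inv]

end Stmt6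

open Stmt6 in
/-- For jointly intersecting nontrivial finitely supported permutations `σ₁,…,σ_r`,
`2·|supp(σ₁) ∪ ⋯ ∪ supp(σ_r)| ≤ |σ₁⋯σ_r| + Σ_j |supp(σ_j)| + Σ_j c(σ_j) + 2 − 2r`. -/
theorem stmt6 (r : ℕ) (hr : 1 ≤ r) (σ : Fin r → Equiv.Perm ℕ)
    (hfin : ∀ j, {x | σ j x ≠ x}.Finite) (hne : ∀ j, σ j ≠ 1)
    (hconn : (intersectGraph σ).Connected) :
    2 * (Set.ncard (⋃ j, {x | σ j x ≠ x}) : ℤ) ≤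
      (cayleyDist (List.ofFn σ).prod : ℤ) + (∑ j, (Set.ncard {x | σ j x ≠ x} : ℤ)) +
        (∑ j, (numCycles (σ j) : ℤ)) + 2 - 2 * (r : ℤ) := by
  classical
  have hfin' : ∀ j, (psupp (σ j)).Finite := hfin
  -- minimal-length swap factorizations of the σ j
  have hex : ∀ j, ∃ L : List (Equiv.Perm ℕ),
      (∀ g ∈ L, ∃ a b, a ≠ b ∧ g = Equiv.swap a b) ∧ L.prod = σ j ∧
        (L.length : ℤ) ≤ defect (σ j) :=
    fun j => exists_swap_factorization (σ j) (hfin' j)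
  choose Lf hLsw hLprod hLlen using hex
  set L0 : List (Equiv.Perm ℕ) := (List.ofFn Lf).flatten with hL0
  have hL0mem : ∀ j, ∀ g ∈ Lf j, g ∈ L0 := by
    intro j g hg
    rw [hL0, List.mem_flatten]
    exact ⟨Lf j, by rw [List.mem_ofFn]; exact ⟨j, rfl⟩, hg⟩
  have hL0sw : ∀ g ∈ L0, ∃ a b, a ≠ b ∧ g = Equiv.swap a b := by
    intro g hg
    rw [hL0, List.mem_flatten] at hg
    obtain ⟨l', hl', hgl'⟩ := hg
    rw [List.mem_ofFn] at hl'
    obtain ⟨j, rfl⟩ := hl'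
    exact hLsw j g hgl'
  have hL0prod : L0.prod = (List.ofFn σ).prod := by
    rw [hL0, List.prod_flatten, List.map_ofFn]
    congr 1
    have : List.prod ∘ Lf = σ := by
      funext j
      exact hLprod j
    rw [this]
  have hL0len : (L0.length : ℤ) ≤
      (∑ j, (Set.ncard {x | σ j x ≠ x} : ℤ)) - (∑ j, (numCycles (σ j) : ℤ)) := by
    have h1 : L0.length = ∑ j, (Lf j).length := by
      rw [hL0, List.length_flatten, List.map_ofFn]
      have : List.length ∘ Lf = fun j => (Lf j).length := rfl
      rw [this, List.sum_ofFn]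
    have h2 : (L0.length : ℤ) = ∑ j, ((Lf j).length : ℤ) := by
      rw [h1]; push_cast; rfl
    have h3 : (∑ j, ((Lf j).length : ℤ)) ≤ ∑ j, defect (σ j) :=
      Finset.sum_le_sum (fun j _ => hLlen j)
    have h4 : (∑ j, defect (σ j)) =
        (∑ j, (Set.ncard {x | σ j x ≠ x} : ℤ)) - (∑ j, (numCycles (σ j) : ℤ)) := by
      rw [← Finset.sum_sub_distrib]
      rfl
    omega
  -- the minimal factorization of the product
  set π := (List.ofFn σ).prod with hπ
  have hmemS : cayleyDist π ∈ {m | ∃ l : List (Equiv.Perm ℕ), l.length = m ∧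
      (∀ g ∈ l, ∃ a b, a ≠ b ∧ g = Equiv.swap a b) ∧ l.prod = π} :=
    Nat.sInf_mem ⟨L0.length, L0, rfl, hL0sw, hL0prod⟩
  simp only [Set.mem_setOf_eq] at hmemS
  obtain ⟨l, hlen, hlsw, hlprod⟩ := hmemS
  -- the combined list with product 1
  set L : List (Equiv.Perm ℕ) := L0 ++ l.reverse with hL
  have hLsw' : ∀ g ∈ L, ∃ a b, a ≠ b ∧ g = Equiv.swap a b := by
    intro g hg
    rw [hL, List.mem_append] at hg
    rcases hg with hg | hg
    · exact hL0sw g hg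
    · rw [List.mem_reverse] at hg
      exact hlsw g hg
  have hLprod1 : L.prod = 1 := by
    rw [hL, List.prod_append, reverse_prod_of_swaps l hlsw, hlprod, hL0prod,
      mul_inv_cancel]
  -- genus bound
  have hVfin : (Vl L).Finite := Vl_finite hLsw'
  have hg := genus_bound L hLsw'
  rw [hLprod1, defect_one] at hg
  -- rank comparison between U and Vl L
  set U : Set ℕ := ⋃ j, {x | σ j x ≠ x} with hU
  have hUfin : U.Finite := Set.finite_iUnion hfin
  have hUsub : U ⊆ Vl L := by
    intro x hx
    rw [hU, Set.mem_iUnion] at hx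
    obtain ⟨j, hj⟩ := hx
    have hj' : x ∈ psupp ((Lf j).prod) := by
      rw [hLprod j]; exact hj
    obtain ⟨g, hg', hgx⟩ := psupp_prod_subset (Lf j) hj'
    exact ⟨g, by rw [hL]; exact List.mem_append_left _ (hL0mem j g hg'), hgx⟩
  have hrel : ∀ x y, orelS (Set.range σ) x y → orell L x y := by
    apply orelS_mono
    rintro g ⟨j, rfl⟩
    rw [← hLprod j]
    apply list_prod_mem
    intro g' hg'
    apply Subgroup.subset_closure
    show g' ∈ L
    rw [hL]
    exact List.mem_append_left _ (hL0mem j g' hg')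
  have hrank1 : nclasses (orell L) U ≤ nclasses (orelS (Set.range σ)) U :=
    nclasses_coarser_le (orelS_equivalence _) (orelS_equivalence _) hrel hUfin
  have hrank2 : (U.ncard : ℤ) - nclasses (orell L) U ≤
      ((Vl L).ncard : ℤ) - nclasses (orell L) (Vl L) := rank_mono_set hVfin hUsub
  -- connectivity bound
  have hc : nclasses (orelS (Set.range σ)) U + r ≤ (∑ j, numCycles (σ j)) + 1 :=
    conn_bound σ hfin' hconn
  -- put everything together
  have hq : qgraph L = nclasses (orell L) (Vl L) := rfl
  rw [hq] at hg
  have hlengths : (L.length : ℤ) = (L0.length : ℤ) + (cayleyDist π : ℤ) := by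
    rw [hL, List.length_append, List.length_reverse, hlen]
    push_cast
    ring
  have hcℤ : (nclasses (orelS (Set.range σ)) U : ℤ) + (r : ℤ) ≤
      (∑ j, (numCycles (σ j) : ℤ)) + 1 := by
    exact_mod_cast hc
  have hrank1ℤ : (nclasses (orell L) U : ℤ) ≤ (nclasses (orelS (Set.range σ)) U : ℤ) := by
    exact_mod_cast hrank1
  linarith [hg, hrank2, hrank1ℤ, hcℤ, hL0len, hlengths]
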